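/- Incomplete integral of Jacobi polynomials via the Rodrigues recursion: let α, β > −1 be real, let w^{(α,β)}(ξ) = (1−ξ)^α·(1+ξ)^β for ξ ∈ (−1,1), and define the Jacobi polynomials through Rodrigues' formula, P_i^{(α,β)}(ξ) = ( (−2)^i · i! · w^{(α,β)}(ξ) )^{−1} · (d^i/dξ^i)[ (1−ξ)^{α+i}·(1+ξ)^{β+i} ]. Then for every integer i ≥ 1 and every x ∈ (−1,1), ∫_{−1}^{x} P_i^{(α,β)}(ξ)·w^{(α,β)}(ξ) dξ = −(1/(2·i))·P_{i−1}^{(α+1,β+1)}(x)·w^{(α+1,β+1)}(x). -/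

import Mathlib

open Real Set Finset

lemma jac_hasDerivAt_term (a b t : ℝ) (h1 : 0 < 1 - t) (h2 : 0 < 1 + t) :
    HasDerivAt (fun s : ℝ => (1-s)^a * (1+s)^b)
      (-(a * (1-t)^(a-1) * (1+t)^b) + (1-t)^a * (b*(1+t)^(b-1))) t := by
  have d1 : HasDerivAt (fun s : ℝ => (1-s)^a) (a * (1-t)^(a-1) * (-1)) t :=
    (Real.hasDerivAt_rpow_const (Or.inl h1.ne')).comp t ((hasDerivAt_id t).const_sub 1)
  have d2 : HasDerivAt (fun s : ℝ => (1+s)^b) (b * (1+t)^(b-1) * 1) t :=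
    (Real.hasDerivAt_rpow_const (Or.inl h2.ne')).comp t ((hasDerivAt_id t).const_add 1)
  have := d1.fun_mul d2
  exact this.congr_deriv (by ring)

lemma jac_iteratedDeriv (p q : ℝ) (n : ℕ) : ∃ c : ℕ → ℝ,
    ∀ t ∈ Set.Ioo (-1:ℝ) 1,
      iteratedDeriv n (fun s : ℝ => (1-s)^p * (1+s)^q) t
        = ∑ k ∈ Finset.range (n+1), c k * ((1-t)^(p - k) * (1+t)^(q - n + k)) := by
  induction n with
  | zero =>
    refine ⟨fun _ => 1, fun t ht => ?_⟩
    simp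
  | succ n ih =>
    obtain ⟨c, hc⟩ := ih
    refine ⟨fun j => (if j = 0 then 0 else -(p - (j-1:ℕ)) * c (j-1)) +
      (if j ≤ n then (q - n + j) * c j else 0), fun t ht => ?_⟩
    obtain ⟨ht1, ht2⟩ := ht
    have h1 : (0:ℝ) < 1 - t := by linarith
    have h2 : (0:ℝ) < 1 + t := by linarith
    have heq : iteratedDeriv n (fun s : ℝ => (1-s)^p * (1+s)^q)
        =ᶠ[nhds t] fun t => ∑ k ∈ Finset.range (n+1), c k * ((1-t)^(p - k) * (1+t)^(q - n + k)) :=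
      Filter.eventuallyEq_of_mem (isOpen_Ioo.mem_nhds ⟨ht1, ht2⟩) (fun s hs => hc s hs)
    rw [iteratedDeriv_succ, heq.deriv_eq]
    have hd : HasDerivAt (fun t => ∑ k ∈ Finset.range (n+1), c k * ((1-t)^(p - k) * (1+t)^(q - n + k)))
        (∑ k ∈ Finset.range (n+1), c k * (-((p-k) * (1-t)^(p-k-1) * (1+t)^(q-n+k)) +
          (1-t)^(p-k) * ((q-n+k)*(1+t)^(q-n+k-1)))) t := by
      refine HasDerivAt.fun_sum fun k hk => ?_
      exact (jac_hasDerivAt_term (p-k) (q-n+k) t h1 h2).const_mul (c k)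
    rw [hd.deriv]
    have split : ∀ j ∈ Finset.range (n+2),
        ((if j = 0 then 0 else -(p - (j-1:ℕ)) * c (j-1)) + (if j ≤ n then (q - n + j) * c j else 0))
          * ((1-t)^(p - j) * (1+t)^(q - (n+1:ℕ) + j))
        = (if j = 0 then 0 else -(p - (j-1:ℕ)) * c (j-1)) * ((1-t)^(p - j) * (1+t)^(q - (n+1:ℕ) + j))
          + (if j ≤ n then (q - n + j) * c j else 0) * ((1-t)^(p - j) * (1+t)^(q - (n+1:ℕ) + j)) := by
      intro j _; ring
    rw [Finset.sum_congr rfl split, Finset.sum_add_distrib]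
    rw [Finset.sum_range_succ' (fun j => (if j = 0 then 0 else -(p - (j-1:ℕ)) * c (j-1)) * ((1-t)^(p - j) * (1+t)^(q - (n+1:ℕ) + j))) (n+1)]
    rw [Finset.sum_range_succ (fun j => (if j ≤ n then (q - n + j) * c j else 0) * ((1-t)^(p - j) * (1+t)^(q - (n+1:ℕ) + j))) (n+1)]
    have e2 : ∑ j ∈ Finset.range (n+1), (if j ≤ n then (q - n + j) * c j else 0) * ((1-t)^(p - j) * (1+t)^(q - (n+1:ℕ) + j))
        = ∑ j ∈ Finset.range (n+1), ((q - n + j) * c j) * ((1-t)^(p - j) * (1+t)^(q - (n+1:ℕ) + j)) :=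
      Finset.sum_congr rfl fun j hj => by rw [if_pos (Finset.mem_range_succ_iff.mp hj)]
    simp only [Nat.succ_ne_zero, ite_false, ite_true, Nat.add_sub_cancel,
      if_neg (Nat.not_succ_le_self n), zero_mul, add_zero]
    rw [e2, ← Finset.sum_add_distrib]
    refine Finset.sum_congr rfl fun k hk => ?_
    push_cast
    ring_nf


lemma jac_intint (x d e K : ℝ) (hx1 : (-1:ℝ) < x) (hx2 : x < 1) (he : -1 < e) :
    IntervalIntegrable (fun t => K * ((1-t)^d * (1+t)^e)) MeasureTheory.volume (-1) x := by
  have h0 : IntervalIntegrable (fun t : ℝ => (1+t)^e) MeasureTheory.volume (-1) x := by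
    have := (intervalIntegral.intervalIntegrable_rpow' (a := 0) (b := x+1) he).comp_add_right 1
    simp only [zero_sub, add_sub_cancel_right] at this
    refine this.congr ?_
    intro t _
    dsimp only
    rw [add_comm]
  have h1 : ContinuousOn (fun t : ℝ => K * (1-t)^d) (Set.uIcc (-1) x) := by
    refine continuousOn_const.mul ?_
    refine ContinuousOn.rpow_const ((continuous_const.sub continuous_id).continuousOn) ?_
    intro t ht
    rw [Set.uIcc_of_le hx1.le] at ht
    exact Or.inl (by have := ht.2; intro h; nlinarith)
  have := h0.mul_continuousOn h1
  refine this.congr ?_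
  intro t _
  ring
open intervalIntegral in
theorem stmt_19 (α β : ℝ) (hα : -1 < α) (hβ : -1 < β)
    (w : ℝ → ℝ → ℝ → ℝ)
    (hw : ∀ a b ξ, w a b ξ = (1 - ξ) ^ a * (1 + ξ) ^ b)
    (Jac : ℕ → ℝ → ℝ → ℝ → ℝ)
    (hJac : ∀ (i : ℕ) (a b : ℝ), ∀ ξ ∈ Set.Ioo (-1 : ℝ) 1,
      Jac i a b ξ = (((-2 : ℝ)^i * (Nat.factorial i : ℝ)) * w a b ξ)⁻¹ *
        iteratedDeriv i (fun t => (1 - t) ^ (a + (i : ℝ)) * (1 + t) ^ (b + (i : ℝ))) ξ)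
    (i : ℕ) (hi : 1 ≤ i) (x : ℝ) (hx : x ∈ Set.Ioo (-1 : ℝ) 1) :
    ∫ ξ in (-1 : ℝ)..x, Jac i α β ξ * w α β ξ
      = -(1 / (2 * i)) * Jac (i-1) (α+1) (β+1) x * w (α+1) (β+1) x := by
  obtain ⟨m, rfl⟩ : ∃ m, i = m + 1 := ⟨i - 1, (Nat.succ_pred_eq_of_pos hi).symm⟩
  obtain ⟨hx1, hx2⟩ := hx
  set P : ℝ := α + ((m+1 : ℕ) : ℝ) with hP
  set Q : ℝ := β + ((m+1 : ℕ) : ℝ) with hQ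
  obtain ⟨c, hc⟩ := jac_iteratedDeriv P Q m
  set G : ℝ → ℝ := fun t => ∑ k ∈ Finset.range (m+1),
    c k * ((1-t)^(P - k) * (1+t)^(Q - m + k)) with hG
  set G' : ℝ → ℝ := fun t => ∑ k ∈ Finset.range (m+1),
    c k * (-((P-k) * (1-t)^(P-k-1) * (1+t)^(Q-m+k)) +
      (1-t)^(P-k) * ((Q-m+k)*(1+t)^(Q-m+k-1))) with hG'
  set C : ℝ := ((-2:ℝ)^(m+1) * ((m+1).factorial : ℝ))⁻¹ with hC
  have hkey : ∀ a g W : ℝ, W ≠ 0 → (a * W)⁻¹ * g * W = a⁻¹ * g := by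
    intro a g W hW
    rw [mul_inv]
    calc a⁻¹ * W⁻¹ * g * W = a⁻¹ * g * (W⁻¹ * W) := by ring
      _ = a⁻¹ * g := by rw [inv_mul_cancel₀ hW, mul_one]
  -- basic positivity
  have hwpos : ∀ a b : ℝ, ∀ t ∈ Set.Ioo (-1:ℝ) 1, 0 < w a b t := by
    intro a b t ht
    rw [hw]
    exact mul_pos (Real.rpow_pos_of_pos (by linarith [ht.2]) a)
      (Real.rpow_pos_of_pos (by linarith [ht.1]) b)
  have hQpos : ∀ k : ℕ, (0:ℝ) < Q - m + k := by
    intro k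
    have := Nat.cast_nonneg (α := ℝ) k
    rw [hQ]; push_cast; linarith
  have hQm1 : ∀ k : ℕ, (-1:ℝ) < Q - m + k - 1 := by
    intro k; have := hQpos k; linarith
  -- derivative of G
  have hGderiv : ∀ t ∈ Set.Ioo (-1:ℝ) 1, HasDerivAt G (G' t) t := by
    intro t ht
    refine HasDerivAt.fun_sum fun k hk => ?_
    exact (jac_hasDerivAt_term (P-k) (Q-m+k) t (by linarith [ht.2]) (by linarith [ht.1])).const_mul (c k)
  -- the integrand equals C * G' on Ioo
  have hintg : ∀ t ∈ Set.Ioo (-1:ℝ) 1,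
      Jac (m+1) α β t * w α β t = C * G' t := by
    intro t ht
    have h1 : iteratedDeriv (m+1) (fun s : ℝ => (1-s)^P * (1+s)^Q) t = G' t := by
      rw [iteratedDeriv_succ]
      have heq : iteratedDeriv m (fun s : ℝ => (1-s)^P * (1+s)^Q) =ᶠ[nhds t] G :=
        Filter.eventuallyEq_of_mem (isOpen_Ioo.mem_nhds ht) (fun s hs => hc s hs)
      rw [heq.deriv_eq, (hGderiv t ht).deriv]
    rw [hJac (m+1) α β t ht]
    have h2 : (fun s : ℝ => (1 - s) ^ (α + ((m+1:ℕ) : ℝ)) * (1 + s) ^ (β + ((m+1:ℕ) : ℝ)))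
        = (fun s : ℝ => (1-s)^P * (1+s)^Q) := rfl
    rw [h2, h1]
    exact hkey _ _ _ (hwpos α β t ht).ne'
  -- integrability of G'
  have hG'int : IntervalIntegrable G' MeasureTheory.volume (-1) x := by
    have heach : ∀ k ∈ Finset.range (m+1), IntervalIntegrable
        (fun t : ℝ => c k * (-((P-k) * (1-t)^(P-k-1) * (1+t)^(Q-m+k)) +
          (1-t)^(P-k) * ((Q-m+k)*(1+t)^(Q-m+k-1)))) MeasureTheory.volume (-1) x := by
      intro k hk
      have h1 := jac_intint x (P-k-1) (Q-m+k) (c k * -(P-k)) hx1 hx2 (by linarith [hQpos k])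
      have h2 := jac_intint x (P-k) (Q-m+k-1) (c k * (Q-m+k)) hx1 hx2 (hQm1 k)
      refine (h1.add h2).congr ?_
      intro t _
      ring
    have hsum := IntervalIntegrable.sum (μ := MeasureTheory.volume) (a := -1) (b := x)
      (Finset.range (m+1)) heach
    have hfeq : (∑ k ∈ Finset.range (m+1), fun t : ℝ =>
        c k * (-((P-k) * (1-t)^(P-k-1) * (1+t)^(Q-m+k)) +
          (1-t)^(P-k) * ((Q-m+k)*(1+t)^(Q-m+k-1)))) = G' := by
      funext t
      rw [hG']
      simp [Finset.sum_apply]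
    rwa [hfeq] at hsum
  -- FTC
  have hftc : ∫ ξ in (-1 : ℝ)..x, Jac (m+1) α β ξ * w α β ξ = C * G x - C * G (-1) := by
    have hcont : ContinuousOn (fun t => C * G t) (Set.Icc (-1) x) := by
      refine continuousOn_const.mul ?_
      rw [hG]
      refine continuousOn_finset_sum _ fun k hk => ?_
      refine continuousOn_const.mul (ContinuousOn.mul ?_ ?_)
      · refine ((continuous_const.sub continuous_id).continuousOn).rpow_const fun t ht => ?_
        refine Or.inl fun h => ?_
        simp only [Pi.sub_apply, id_eq] at h
        have := ht.2
        nlinarith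
      · exact ((continuous_const.add continuous_id).continuousOn).rpow_const
          fun t ht => Or.inr (hQpos k).le
    have hderiv : ∀ t ∈ Set.Ioo (-1:ℝ) x,
        HasDerivAt (fun t => C * G t) (Jac (m+1) α β t * w α β t) t := by
      intro t ht
      have ht' : t ∈ Set.Ioo (-1:ℝ) 1 := ⟨ht.1, lt_trans ht.2 hx2⟩
      rw [hintg t ht']
      exact (hGderiv t ht').const_mul C
    have hint : IntervalIntegrable (fun ξ => Jac (m+1) α β ξ * w α β ξ)
        MeasureTheory.volume (-1) x := by
      rw [intervalIntegrable_iff_integrableOn_Ioc_of_le hx1.le]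
      have h3 : IntervalIntegrable (fun t => C * G' t) MeasureTheory.volume (-1) x :=
        hG'int.const_mul C
      refine MeasureTheory.IntegrableOn.congr_fun
        ((intervalIntegrable_iff_integrableOn_Ioc_of_le hx1.le).mp h3) ?_ measurableSet_Ioc
      intro t ht
      exact (hintg t ⟨ht.1, lt_of_le_of_lt ht.2 hx2⟩).symm
    exact integral_eq_sub_of_hasDerivAt_of_le hx1.le hcont hderiv hint
  have hG0 : G (-1) = 0 := by
    refine Finset.sum_eq_zero fun k hk => ?_
    rw [show ((1:ℝ) + -1) = 0 by norm_num, Real.zero_rpow (hQpos k).ne', mul_zero, mul_zero]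
  rw [hftc, hG0, mul_zero, sub_zero]
  simp only [Nat.add_sub_cancel]
  rw [hJac m (α+1) (β+1) x ⟨hx1, hx2⟩]
  have hfun : (fun t : ℝ => (1 - t) ^ ((α+1) + (m:ℝ)) * (1 + t) ^ ((β+1) + (m:ℝ)))
      = fun s : ℝ => (1-s)^P * (1+s)^Q := by
    funext t; rw [hP, hQ]; push_cast; ring_nf
  rw [hfun, hc x ⟨hx1, hx2⟩]
  have hGx : G x = ∑ k ∈ Finset.range (m+1), c k * ((1-x)^(P-(k:ℝ)) * (1+x)^(Q-(m:ℝ)+k)) := rfl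
  rw [hGx, hC]
  have hwne := (hwpos (α+1) (β+1) x ⟨hx1, hx2⟩).ne'
  have h2m : ((-2:ℝ))^m ≠ 0 := pow_ne_zero _ (by norm_num)
  have hfac : (m.factorial:ℝ) ≠ 0 := Nat.cast_ne_zero.mpr m.factorial_ne_zero
  have hfs : (((m+1).factorial : ℕ) : ℝ) = ((m:ℝ)+1) * (m.factorial:ℝ) := by
    rw [Nat.factorial_succ]; push_cast; ring
  rw [hfs, pow_succ]
  push_cast
  field_simp
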